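/- Let A be a real symmetric n×n matrix with spectral decomposition given by distinct real eigenvalues θ_1,…,θ_m and idempotents E_1,…,E_m, and let P be a real density matrix. Then there exists a time t > 0 such that all entries of U(t)·P·U(−t) are real if and only if the eigenvalue support of P satisfies the ratio condition. -/

import Mathlib

open Matrix
open scoped ComplexOrder

private lemma pow_idem {n : ℕ} {E : Matrix (Fin n) (Fin n) ℂ} (hE : E * E = E) :
    ∀ k : ℕ, E ^ (k + 1) = E := by
  intro k; induction k with
  | zero => simp
  | succ k ih => rw [pow_succ, ih, hE]

lemma exp_smul_idem {n : ℕ} (E : Matrix (Fin n) (Fin n) ℂ) (hE : E * E = E) (c : ℂ) :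
    NormedSpace.exp (c • E) = 1 + (Complex.exp c - 1) • E := by
  rw [NormedSpace.exp_eq_tsum (𝕂 := ℂ)]
  have h1 : ∀ k : ℕ, ((k.factorial : ℂ))⁻¹ • (c • E) ^ k
      = (((k.factorial : ℂ))⁻¹ * c ^ k) • E + (if k = 0 then (1 : Matrix (Fin n) (Fin n) ℂ) - E else 0) := by
    intro k
    cases k with
    | zero => simp
    | succ k =>
        rw [smul_pow, pow_idem hE, smul_smul]
        simp
  beta_reduce
  rw [tsum_congr h1]
  have hs1 : Summable fun k : ℕ => (((k.factorial : ℂ))⁻¹ * c ^ k) := by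
    simpa [smul_eq_mul] using NormedSpace.expSeries_summable' (𝕂 := ℂ) c
  have hs2 : Summable fun k : ℕ => (((k.factorial : ℂ))⁻¹ * c ^ k) • E := hs1.smul_const E
  have hs3 : Summable fun k : ℕ =>
      (if k = 0 then (1 : Matrix (Fin n) (Fin n) ℂ) - E else 0) :=
    (hasSum_ite_eq 0 ((1 : Matrix (Fin n) (Fin n) ℂ) - E)).summable
  rw [Summable.tsum_add hs2 hs3, Summable.tsum_smul_const hs1, tsum_ite_eq]
  have : ∑' k : ℕ, (((k.factorial : ℂ))⁻¹ * c ^ k) = Complex.exp c := by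
    rw [Complex.exp_eq_exp_ℂ, NormedSpace.exp_eq_tsum (𝕂 := ℂ)]
    simp [smul_eq_mul]
  rw [this, sub_smul, one_smul]
  abel

lemma exp_sum_orth {n m : ℕ} (E : Fin m → Matrix (Fin n) (Fin n) ℂ)
    (hEmul : ∀ r s : Fin m, E r * E s = if r = s then E r else 0)
    (c : Fin m → ℂ) (S : Finset (Fin m)) :
    NormedSpace.exp (∑ r ∈ S, c r • E r)
      = 1 + ∑ r ∈ S, (Complex.exp (c r) - 1) • E r := by
  induction S using Finset.cons_induction with
  | empty => simp [NormedSpace.exp_zero]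
  | cons a S ha ih =>
    have horth : ∀ r ∈ S, E a * E r = 0 ∧ E r * E a = 0 := by
      intro r hr
      have hra : a ≠ r := fun h => ha (h ▸ hr)
      constructor
      · rw [hEmul]; simp [hra]
      · rw [hEmul]; simp [hra.symm]
    have hcomm : Commute (c a • E a) (∑ r ∈ S, c r • E r) := by
      apply Commute.sum_right
      intro r hr
      show _ = _
      simp [smul_mul_assoc, mul_smul_comm, (horth r hr).1, (horth r hr).2]
    rw [Finset.sum_cons, Matrix.exp_add_of_commute _ _ hcomm, ih,
      exp_smul_idem (E a) (by simpa using hEmul a a) (c a)]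
    have hEaS : E a * (∑ r ∈ S, (Complex.exp (c r) - 1) • E r) = 0 := by
      rw [Finset.mul_sum]
      refine Finset.sum_eq_zero fun r hr => ?_
      rw [mul_smul_comm, (horth r hr).1, smul_zero]
    rw [Finset.sum_cons]
    rw [add_mul, one_mul, mul_add, mul_one, smul_mul_assoc, hEaS, smul_zero]
    abel

/-- The transition matrix `U(t) = exp(itA)`. -/
noncomputable def U {n : ℕ} (A : Matrix (Fin n) (Fin n) ℂ) (t : ℝ) :
    Matrix (Fin n) (Fin n) ℂ :=
  NormedSpace.exp (((t : ℂ) * Complex.I) • A)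

lemma U_formula {n m : ℕ} (A : Matrix (Fin n) (Fin n) ℂ)
    (θ : Fin m → ℝ) (E : Fin m → Matrix (Fin n) (Fin n) ℂ)
    (hEmul : ∀ r s : Fin m, E r * E s = if r = s then E r else 0)
    (hEsum : ∑ r, E r = 1)
    (hspec : A = ∑ r, (θ r : ℂ) • E r) (t : ℝ) :
    U A t = ∑ r, Complex.exp ((t : ℂ) * Complex.I * (θ r)) • E r := by
  have h1 : ((t : ℂ) * Complex.I) • A = ∑ r, ((t : ℂ) * Complex.I * (θ r)) • E r := by
    rw [hspec, Finset.smul_sum]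
    refine Finset.sum_congr rfl fun r _ => ?_
    rw [smul_smul]
  rw [U, h1, exp_sum_orth E hEmul]
  have h2 : ∑ r, (Complex.exp ((t : ℂ) * Complex.I * (θ r)) - 1) • E r
      = (∑ r, Complex.exp ((t : ℂ) * Complex.I * (θ r)) • E r) - ∑ r : Fin m, E r := by
    rw [← Finset.sum_sub_distrib]
    refine Finset.sum_congr rfl fun r _ => ?_
    rw [sub_smul, one_smul]
  rw [h2, hEsum]
  abel

lemma conj_smul_mat {n : ℕ} (a : ℂ) (M : Matrix (Fin n) (Fin n) ℂ) :
    (starRingEnd ℂ).mapMatrix (a • M) = (starRingEnd ℂ) a • (starRingEnd ℂ).mapMatrix M := by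
  ext i j
  simp [RingHom.mapMatrix_apply, Matrix.map_apply]

lemma conj_E_eq {n m : ℕ} (A : Matrix (Fin n) (Fin n) ℂ)
    (hAreal : ∀ i j, (A i j).im = 0)
    (θ : Fin m → ℝ) (hθ : Function.Injective θ)
    (E : Fin m → Matrix (Fin n) (Fin n) ℂ)
    (hEmul : ∀ r s : Fin m, E r * E s = if r = s then E r else 0)
    (hEsum : ∑ r, E r = 1)
    (hspec : A = ∑ r, (θ r : ℂ) • E r) (r : Fin m) :
    (starRingEnd ℂ).mapMatrix (E r) = E r := by
  let φ : Matrix (Fin n) (Fin n) ℂ →+* Matrix (Fin n) (Fin n) ℂ := (starRingEnd ℂ).mapMatrix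
  set F : Fin m → Matrix (Fin n) (Fin n) ℂ := fun s => φ (E s) with hF
  have hAc : φ A = A := by
    ext i j
    simp only [φ, RingHom.mapMatrix_apply, Matrix.map_apply]
    exact Complex.conj_eq_iff_im.2 (hAreal i j)
  have hFmul : ∀ k l : Fin m, F k * F l = if k = l then F k else 0 := by
    intro k l
    rw [hF]
    show φ (E k) * φ (E l) = _
    rw [← _root_.map_mul, hEmul]
    split <;> simp [φ]
  have hFsum : ∑ s, F s = 1 := by
    rw [hF]
    show ∑ s, φ (E s) = 1
    rw [← _root_.map_sum, hEsum, _root_.map_one]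
  have hAF : A = ∑ s, (θ s : ℂ) • F s := by
    conv_lhs => rw [← hAc, hspec, _root_.map_sum]
    refine Finset.sum_congr rfl fun s _ => ?_
    show φ (_ • _) = _
    rw [conj_smul_mat]
    norm_num
    rfl
  have hEA : ∀ k, E k * A = (θ k : ℂ) • E k := by
    intro k
    rw [hspec, Finset.mul_sum]
    rw [Finset.sum_eq_single k]
    · rw [mul_smul_comm, hEmul]; simp
    · intro s _ hs
      rw [mul_smul_comm, hEmul]
      simp [Ne.symm hs]
    · simp
  have hAF2 : ∀ l, A * F l = (θ l : ℂ) • F l := by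
    intro l
    rw [hAF, Finset.sum_mul]
    rw [Finset.sum_eq_single l]
    · rw [smul_mul_assoc, hFmul]; simp
    · intro s _ hs
      rw [smul_mul_assoc, hFmul]
      simp [hs]
    · simp
  have hEF0 : ∀ k l, k ≠ l → E k * F l = 0 := by
    intro k l hkl
    have h1 : E k * A * F l = (θ k : ℂ) • (E k * F l) := by
      rw [hEA, smul_mul_assoc]
    have h2 : E k * A * F l = (θ l : ℂ) • (E k * F l) := by
      rw [mul_assoc, hAF2, mul_smul_comm]
    have h3 : ((θ k : ℂ) - (θ l : ℂ)) • (E k * F l) = 0 := by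
      rw [sub_smul, ← h1, ← h2, sub_self]
    rcases smul_eq_zero.1 h3 with h | h
    · exfalso
      apply hkl
      apply hθ
      have : (θ k : ℂ) = (θ l : ℂ) := by linear_combination h
      exact_mod_cast this
    · exact h
  have h4 : E r * F r = E r := by
    conv_rhs => rw [← mul_one (E r), ← hFsum, Finset.mul_sum]
    rw [Finset.sum_eq_single r]
    · intro s _ hs
      exact hEF0 r s (Ne.symm hs)
    · simp
  have h5 : E r * F r = F r := by
    conv_rhs => rw [← one_mul (F r), ← hEsum, Finset.sum_mul]
    rw [Finset.sum_eq_single r]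
    · intro s _ hs
      exact hEF0 s r hs
    · simp
  show F r = E r
  rw [← h5, h4]

/-- For a real symmetric `A` with spectral decomposition
`A = ∑ θ_r • E_r` and a real density matrix `P`, there is a time `t > 0` such that
`U(t)·P·U(−t)` is real if and only if the eigenvalue support of `P` satisfies the
ratio condition. -/
theorem stmt_1 {n m : ℕ} (hn : 1 ≤ n)
    (A : Matrix (Fin n) (Fin n) ℂ)
    (hAreal : ∀ i j, (A i j).im = 0) (hAsym : Aᵀ = A)
    (θ : Fin m → ℝ) (hθ : Function.Injective θ)
    (E : Fin m → Matrix (Fin n) (Fin n) ℂ)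
    (hE0 : ∀ r, E r ≠ 0)
    (hEherm : ∀ r, (E r).IsHermitian)
    (hEmul : ∀ r s : Fin m, E r * E s = if r = s then E r else 0)
    (hEsum : ∑ r, E r = 1)
    (hspec : A = ∑ r, (θ r : ℂ) • E r)
    (P : Matrix (Fin n) (Fin n) ℂ)
    (hP : P.PosSemidef) (hPtr : P.trace = 1)
    (hPreal : ∀ i j, (P i j).im = 0) :
    (∃ t : ℝ, 0 < t ∧ ∀ i j, ((U A t * P * U A (-t)) i j).im = 0) ↔
      (∀ r s k l : Fin m, E r * P * E s ≠ 0 → E k * P * E l ≠ 0 → θ k ≠ θ l →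
        ∃ q : ℚ, (θ r - θ s) / (θ k - θ l) = (q : ℝ)) := by
  classical
  let φ : Matrix (Fin n) (Fin n) ℂ →+* Matrix (Fin n) (Fin n) ℂ := (starRingEnd ℂ).mapMatrix
  have hEc : ∀ r, φ (E r) = E r := fun r => conj_E_eq A hAreal θ hθ E hEmul hEsum hspec r
  have hPc : φ P = P := by
    ext i j
    simp only [φ, RingHom.mapMatrix_apply, Matrix.map_apply]
    exact Complex.conj_eq_iff_im.2 (hPreal i j)
  have hU : ∀ u : ℝ, U A u = ∑ r, Complex.exp ((u : ℂ) * Complex.I * (θ r)) • E r :=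
    fun u => U_formula A θ E hEmul hEsum hspec u
  have hM : ∀ u : ℝ, U A u * P * U A (-u)
      = ∑ r, ∑ s, Complex.exp ((u : ℂ) * Complex.I * ((θ r : ℂ) - (θ s : ℂ))) • (E r * P * E s) := by
    intro u
    rw [hU u, hU (-u)]
    simp only [Finset.sum_mul, Finset.mul_sum, smul_mul_assoc, mul_smul_comm, smul_smul,
      Finset.smul_sum]
    rw [Finset.sum_comm]
    refine Finset.sum_congr rfl fun r _ => Finset.sum_congr rfl fun s _ => ?_
    congr 1
    rw [← Complex.exp_add]
    congr 1
    push_cast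
    ring
  have hUc : ∀ u : ℝ, φ (U A u) = U A (-u) := by
    intro u
    rw [hU u, hU (-u), _root_.map_sum]
    refine Finset.sum_congr rfl fun r _ => ?_
    show φ (_ • _) = _
    rw [conj_smul_mat, hEc]
    congr 1
    rw [← Complex.exp_conj]
    congr 1
    simp only [_root_.map_mul, Complex.conj_ofReal, Complex.conj_I]
    push_cast
    ring
  have hconj : ∀ u : ℝ, φ (U A u * P * U A (-u)) = U A (-u) * P * U A u := by
    intro u
    rw [_root_.map_mul, _root_.map_mul, hPc, hUc, hUc, neg_neg]
  have hrchar : ∀ u : ℝ, (∀ i j, ((U A u * P * U A (-u)) i j).im = 0) ↔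
      φ (U A u * P * U A (-u)) = U A u * P * U A (-u) := by
    intro u
    constructor
    · intro h
      ext i j
      simp only [φ, RingHom.mapMatrix_apply, Matrix.map_apply]
      exact Complex.conj_eq_iff_im.2 (h i j)
    · intro h i j
      rw [← Complex.conj_eq_iff_im]
      have h2 : (φ (U A u * P * U A (-u))) i j = (U A u * P * U A (-u)) i j := by rw [h]
      simpa only [φ, RingHom.mapMatrix_apply, Matrix.map_apply] using h2
  have hblock : ∀ (c : Fin m → Fin m → ℂ) (k l : Fin m),
      E k * (∑ r, ∑ s, c r s • (E r * P * E s)) * E l = c k l • (E k * P * E l) := by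
    intro c k l
    have key : ∀ r s : Fin m, E k * (c r s • (E r * P * E s)) * E l
        = if k = r then (if s = l then c r s • (E k * P * E l) else 0) else 0 := by
      intro r s
      have h1 : E k * (c r s • (E r * P * E s)) * E l
          = c r s • ((E k * E r) * (P * (E s * E l))) := by
        simp only [mul_smul_comm, smul_mul_assoc]
        congr 1
        simp only [mul_assoc]
      rw [h1, hEmul, hEmul]
      by_cases hr : k = r
      · by_cases hs : s = l
        · simp [hr, hs, mul_assoc]
        · simp [hr, hs]
      · simp [hr]
    simp only [Finset.mul_sum, Finset.sum_mul]
    rw [Finset.sum_congr rfl fun r _ => Finset.sum_congr rfl fun s _ => key r s]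
    simp
  have hexp : ∀ (u : ℝ) (k l : Fin m),
      (Complex.exp ((u : ℂ) * Complex.I * ((θ k : ℂ) - (θ l : ℂ)))
        = Complex.exp (((-u : ℝ) : ℂ) * Complex.I * ((θ k : ℂ) - (θ l : ℂ)))) ↔
        ∃ z : ℤ, u * (θ k - θ l) = z * Real.pi := by
    intro u k l
    rw [Complex.exp_eq_exp_iff_exists_int]
    constructor
    · rintro ⟨z, hz⟩
      refine ⟨z, ?_⟩
      have h2 : (2 * Complex.I) * ((u * (θ k - θ l) : ℝ) : ℂ)
          = (2 * Complex.I) * (((z : ℝ) * Real.pi : ℝ) : ℂ) := by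
        push_cast at hz ⊢
        linear_combination hz
      have h3 := mul_left_cancel₀
        (by simp [Complex.I_ne_zero] : (2 * Complex.I : ℂ) ≠ 0) h2
      exact_mod_cast h3
    · rintro ⟨z, hz⟩
      refine ⟨z, ?_⟩
      have h4 : ((u * (θ k - θ l) : ℝ) : ℂ) = (((z : ℝ) * Real.pi : ℝ) : ℂ) := by
        exact_mod_cast hz
      push_cast at h4 ⊢
      linear_combination 2 * Complex.I * h4
  have hchar : ∀ u : ℝ, (∀ i j, ((U A u * P * U A (-u)) i j).im = 0) ↔
      (∀ k l : Fin m, E k * P * E l ≠ 0 → ∃ z : ℤ, u * (θ k - θ l) = z * Real.pi) := by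
    intro u
    rw [hrchar u]
    have hL : φ (U A u * P * U A (-u))
        = ∑ r, ∑ s, Complex.exp (((-u : ℝ) : ℂ) * Complex.I * ((θ r : ℂ) - (θ s : ℂ))) • (E r * P * E s) := by
      rw [hconj u]
      have := hM (-u)
      rwa [neg_neg] at this
    rw [hL, hM u]
    constructor
    · intro h k l hB
      rw [← hexp u k l]
      have h2 := congrArg (fun X => E k * X * E l) h
      rw [hblock, hblock] at h2
      by_contra hne
      have h3 : (Complex.exp (((-u : ℝ) : ℂ) * Complex.I * ((θ k : ℂ) - (θ l : ℂ)))
          - Complex.exp ((u : ℂ) * Complex.I * ((θ k : ℂ) - (θ l : ℂ)))) • (E k * P * E l) = 0 := by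
        rw [sub_smul, h2, sub_self]
      rcases smul_eq_zero.1 h3 with h4 | h4
      · exact hne (sub_eq_zero.1 h4).symm
      · exact hB h4
    · intro h
      refine Finset.sum_congr rfl fun r _ => Finset.sum_congr rfl fun s _ => ?_
      by_cases hB : E r * P * E s = 0
      · rw [hB, smul_zero, smul_zero]
      · rw [((hexp u r s).2 (h r s hB))]
  constructor
  · rintro ⟨t, ht, hreal⟩ r s k l hBrs hBkl hθkl
    have h1 := (hchar t).1 hreal
    obtain ⟨a, ha⟩ := h1 r s hBrs
    obtain ⟨b, hb⟩ := h1 k l hBkl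
    have hΔ : θ k - θ l ≠ 0 := sub_ne_zero.2 hθkl
    have hb0 : (b : ℝ) ≠ 0 := by
      intro h0
      rw [h0, zero_mul] at hb
      rcases mul_eq_zero.1 hb with h | h
      · exact absurd h (ne_of_gt ht)
      · exact hΔ h
    refine ⟨(a : ℚ) / (b : ℚ), ?_⟩
    have key : (θ r - θ s) * b = (θ k - θ l) * a := by
      have h5 : t * ((θ r - θ s) * b) = t * ((θ k - θ l) * a) := by
        linear_combination (b : ℝ) * ha - (a : ℝ) * hb
      exact mul_left_cancel₀ (ne_of_gt ht) h5
    push_cast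
    rw [div_eq_div_iff hΔ hb0]
    linear_combination key
  · intro hratio
    by_cases hex : ∃ k l : Fin m, E k * P * E l ≠ 0 ∧ θ k ≠ θ l
    · obtain ⟨k0, l0, hB0, hθ0⟩ := hex
      have hΔ0 : θ k0 - θ l0 ≠ 0 := sub_ne_zero.2 hθ0
      set Q : Fin m → Fin m → ℚ := fun r s =>
        if h : E r * P * E s ≠ 0 then Classical.choose (hratio r s k0 l0 h hB0 hθ0) else 0 with hQdef
      have hQ : ∀ r s, E r * P * E s ≠ 0 → (θ r - θ s) / (θ k0 - θ l0) = ((Q r s : ℚ) : ℝ) := by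
        intro r s h
        simp only [hQdef, dif_pos h]
        exact Classical.choose_spec (hratio r s k0 l0 h hB0 hθ0)
      set N : ℕ := ∏ r, ∏ s, (Q r s).den with hNdef
      have hN0 : 0 < N :=
        Finset.prod_pos fun r _ => Finset.prod_pos fun s _ => (Q r s).pos
      refine ⟨N * Real.pi / |θ k0 - θ l0|,
        div_pos (mul_pos (by exact_mod_cast hN0) Real.pi_pos) (abs_pos.2 hΔ0), ?_⟩
      rw [hchar]
      intro k l hB
      have hθq : θ k - θ l = ((Q k l : ℚ) : ℝ) * (θ k0 - θ l0) :=
        (div_eq_iff hΔ0).1 (hQ k l hB)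
      have hd : (Q k l).den ∣ N := by
        refine dvd_trans ?_ (Finset.dvd_prod_of_mem _ (Finset.mem_univ k))
        exact Finset.dvd_prod_of_mem _ (Finset.mem_univ l)
      obtain ⟨M, hMd⟩ := hd
      have hdenR : ((Q k l).den : ℝ) ≠ 0 := Nat.cast_ne_zero.2 (Q k l).den_nz
      have hNR : (N : ℝ) = ((Q k l).den : ℝ) * (M : ℝ) := by exact_mod_cast hMd
      have hcast : ((Q k l : ℚ) : ℝ) = ((Q k l).num : ℝ) / ((Q k l).den : ℝ) := Rat.cast_def (Q k l)
      have hwR : (N : ℝ) * ((Q k l : ℚ) : ℝ) = ((Q k l).num : ℝ) * (M : ℝ) := by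
        rw [hNR, hcast]
        field_simp
      rcases abs_cases (θ k0 - θ l0) with ⟨habs, _⟩ | ⟨habs, _⟩
      · refine ⟨(Q k l).num * (M : ℤ), ?_⟩
        rw [habs, hθq, div_mul_eq_mul_div, div_eq_iff hΔ0]
        push_cast
        linear_combination Real.pi * (θ k0 - θ l0) * hwR
      · refine ⟨-((Q k l).num * (M : ℤ)), ?_⟩
        rw [habs, hθq, div_mul_eq_mul_div, div_eq_iff (neg_ne_zero.2 hΔ0)]
        push_cast
        linear_combination Real.pi * (θ k0 - θ l0) * hwR
    · push_neg at hex
      refine ⟨1, one_pos, ?_⟩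
      rw [hchar]
      intro k l hB
      refine ⟨0, ?_⟩
      rw [hex k l hB]
      simp
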